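/- The dimension of RM(r,m) over 𝔽₂ equals ∑_{j=0}^{r} binom(m,j). -/

import Mathlib

/-- The Reed-Muller code `RM(r,m)`. -/
def RM (r m : ℕ) : Submodule (ZMod 2) ((Fin m → ZMod 2) → ZMod 2) :=
  Submodule.span (ZMod 2)
    {v | ∃ f : MvPolynomial (Fin m) (ZMod 2),
      f.totalDegree ≤ r ∧ v = fun x => MvPolynomial.eval x f}

namespace RMAux

open Finset MvPolynomial

lemma zmod2_pow (a : ZMod 2) {n : ℕ} (hn : n ≠ 0) : a ^ n = a := by
  have h : a = 0 ∨ a = 1 := by revert a; decide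
  rcases h with h | h <;> subst h
  · exact zero_pow hn
  · exact one_pow n

/-- The multilinear monomial function indexed by a set of variables. -/
def chi (m : ℕ) (S : Finset (Fin m)) : (Fin m → ZMod 2) → ZMod 2 :=
  fun x => ∏ i ∈ S, x i

lemma chi_indicator {m : ℕ} (S T : Finset (Fin m)) :
    chi m S (fun i => if i ∈ T then 1 else 0) = if S ⊆ T then 1 else 0 := by
  unfold chi
  split_ifs with h
  · exact Finset.prod_eq_one fun i hi => by simp [h hi]
  · obtain ⟨i, hiS, hiT⟩ := Finset.not_subset.mp h
    exact Finset.prod_eq_zero hiS (by simp [hiT])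

lemma chi_linearIndependent {m : ℕ} :
    LinearIndependent (ZMod 2) (chi m) := by
  rw [Fintype.linearIndependent_iff]
  intro g hg S
  induction S using Finset.strongInductionOn with
  | _ S ih =>
    have hx := congrFun hg (fun i => if i ∈ S then 1 else 0)
    simp only [Finset.sum_apply, Pi.smul_apply, smul_eq_mul, Pi.zero_apply,
      chi_indicator, mul_ite, mul_one, mul_zero] at hx
    rw [Finset.sum_ite, Finset.sum_const_zero, add_zero] at hx
    have hsum : ∑ T ∈ Finset.univ.filter (fun T => T ⊆ S), g T = g S := by
      refine Finset.sum_eq_single_of_mem S (by simp) fun T hT hne => ?_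
      have hTS : T ⊆ S := (Finset.mem_filter.mp hT).2
      exact ih T (hTS.ssubset_of_ne hne)
    rw [hsum] at hx
    exact hx

lemma RM_eq_span (r m : ℕ) :
    RM r m = Submodule.span (ZMod 2)
      (Set.range fun S : {S : Finset (Fin m) // S.card ≤ r} => chi m S.1) := by
  apply le_antisymm
  · rw [RM]
    apply Submodule.span_le.mpr
    rintro v ⟨f, hf, rfl⟩
    have hv : (fun x => MvPolynomial.eval x f)
        = ∑ d ∈ f.support, MvPolynomial.coeff d f • chi m d.support := by
      funext x
      rw [MvPolynomial.eval_eq]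
      simp only [Finset.sum_apply, Pi.smul_apply, smul_eq_mul, chi]
      refine Finset.sum_congr rfl fun d _ => ?_
      congr 1
      refine Finset.prod_congr rfl fun i hi => ?_
      exact zmod2_pow _ (Finsupp.mem_support_iff.mp hi)
    rw [hv]
    refine Submodule.sum_mem _ fun d hd => Submodule.smul_mem _ _ ?_
    apply Submodule.subset_span
    refine ⟨⟨d.support, ?_⟩, rfl⟩
    calc d.support.card = ∑ _i ∈ d.support, 1 := by simp
      _ ≤ ∑ i ∈ d.support, d i :=
          Finset.sum_le_sum fun i hi =>
            Nat.one_le_iff_ne_zero.mpr (Finsupp.mem_support_iff.mp hi)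
      _ = d.sum fun _ e => e := rfl
      _ ≤ f.totalDegree := MvPolynomial.le_totalDegree hd
      _ ≤ r := hf
  · apply Submodule.span_le.mpr
    rintro v ⟨⟨S, hS⟩, rfl⟩
    apply Submodule.subset_span
    refine ⟨∏ i ∈ S, MvPolynomial.X i, ?_, ?_⟩
    · calc (∏ i ∈ S, (MvPolynomial.X i : MvPolynomial (Fin m) (ZMod 2))).totalDegree
          ≤ ∑ i ∈ S, (MvPolynomial.X i : MvPolynomial (Fin m) (ZMod 2)).totalDegree :=
            MvPolynomial.totalDegree_finset_prod _ _
        _ = S.card := by simp [MvPolynomial.totalDegree_X]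
        _ ≤ r := hS
    · funext x
      simp [chi, MvPolynomial.eval_prod]

lemma card_subtype (r m : ℕ) :
    Fintype.card {S : Finset (Fin m) // S.card ≤ r}
      = ∑ j ∈ Finset.range (r + 1), Nat.choose m j := by
  rw [Fintype.card_subtype]
  have hset : (Finset.univ.filter fun S : Finset (Fin m) => S.card ≤ r)
      = (Finset.range (r + 1)).biUnion fun j => Finset.powersetCard j Finset.univ := by
    ext S
    simp only [Finset.mem_filter, Finset.mem_univ, true_and, Finset.mem_biUnion,
      Finset.mem_range, Finset.mem_powersetCard, Nat.lt_succ_iff]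
    constructor
    · intro h; exact ⟨S.card, h, Finset.subset_univ S, rfl⟩
    · rintro ⟨j, hj, -, rfl⟩; exact hj
  rw [hset, Finset.card_biUnion]
  · exact Finset.sum_congr rfl fun j _ => by
      rw [Finset.card_powersetCard, Finset.card_univ, Fintype.card_fin]
  · intro a _ b _ hab
    rw [Function.onFun, Finset.disjoint_left]
    intro S hSa hSb
    rw [Finset.mem_powersetCard] at hSa hSb
    exact hab (hSa.2 ▸ hSb.2.symm ▸ rfl)

end RMAux

/-- The dimension of `RM(r,m)` over `𝔽₂` is `∑_{j=0}^{r} C(m,j)`. -/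
theorem RM_finrank (r m : ℕ) :
    Module.finrank (ZMod 2) (RM r m) = ∑ j ∈ Finset.range (r + 1), Nat.choose m j := by
  rw [RMAux.RM_eq_span r m]
  have hli : LinearIndependent (ZMod 2)
      (fun S : {S : Finset (Fin m) // S.card ≤ r} => RMAux.chi m S.1) :=
    RMAux.chi_linearIndependent.comp Subtype.val Subtype.val_injective
  rw [finrank_span_eq_card hli, RMAux.card_subtype]
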